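/- Let K ≥ 1 be an integer and let φ be a power spectrum with φ_k > 0 for all k. Then ς_ε(φ) ≥ (K−1)/K, where ς_ε(φ) = (∑_{k=1}^K (∑_{l ≠ k} φ_l²) / (K φ_k²)) / (∑_{k=1}^K φ_k²); equivalently, (1/K) ∑_{k=1}^K 1/φ_k² − 1/(∑_{k=1}^K φ_k²) ≥ (K−1)/K. The bound is attained when φ = (1, 1, …, 1). -/

import Mathlib

open Finset

/-- Lower bound on the noise error-reduction coefficient of Proposition 3: for any
strictly positive power spectrum `φ`,
`ς_ε(φ) = (∑_k (∑_{l≠k} φ_l²)/(K φ_k²))/(∑_k φ_k²) ≥ (K−1)/K`, equivalently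
`(1/K) ∑_k 1/φ_k² − 1/(∑_k φ_k²) ≥ (K−1)/K`; the bound is attained at the uniform
spectrum `(1,…,1)`. -/
theorem noise_reduction_coeff_bound (K : ℕ) (hK : 1 ≤ K)
    (φ : Fin K → ℝ) (hφ : ∀ k, 0 < φ k) (hsum : ∑ k, φ k = (K : ℝ)) :
    (((K : ℝ) - 1) / K ≤
      (∑ k, (∑ l ∈ Finset.univ.erase k, φ l ^ 2) / ((K : ℝ) * φ k ^ 2)) /
        (∑ k, φ k ^ 2)) ∧
    (((K : ℝ) - 1) / K ≤
      (1 / (K : ℝ)) * (∑ k, 1 / φ k ^ 2) - 1 / (∑ k, φ k ^ 2)) ∧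
    ((∑ k : Fin K, (∑ l ∈ Finset.univ.erase k, (1 : ℝ) ^ 2) / ((K : ℝ) * (1 : ℝ) ^ 2)) /
        (∑ k : Fin K, (1 : ℝ) ^ 2) = ((K : ℝ) - 1) / K) := by
  have hK0 : (0 : ℝ) < K := by exact_mod_cast hK
  have hKne : (K : ℝ) ≠ 0 := ne_of_gt hK0
  set S : ℝ := ∑ k, φ k ^ 2 with hS
  have hφsq : ∀ k, (0 : ℝ) < φ k ^ 2 := fun k => pow_pos (hφ k) 2
  have hSpos : 0 < S := Finset.sum_pos (fun k _ => hφsq k) (by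
    simpa using Finset.univ_nonempty_iff.2 (Fin.pos_iff_nonempty.mp (by omega)))
  -- S ≥ K
  have hSK : (K : ℝ) ≤ S := by
    have h := sq_sum_le_card_mul_sum_sq (s := (Finset.univ : Finset (Fin K))) (f := φ)
    rw [hsum, Finset.card_univ, Fintype.card_fin] at h
    have h' : (K : ℝ) * (K : ℝ) ≤ (K : ℝ) * S := by
      have : ((K : ℝ)) ^ 2 = (K : ℝ) * (K : ℝ) := sq (K : ℝ) ▸ rfl
      calc (K : ℝ) * (K : ℝ) = ((K : ℝ))^2 := by ring
        _ ≤ (K : ℝ) * S := h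
    exact le_of_mul_le_mul_left h' hK0
  -- T = ∑ 1/φ ≥ K
  set T : ℝ := ∑ k, 1 / φ k with hT
  have hTK : (K : ℝ) ≤ T := by
    have h := sum_sq_le_sum_mul_sum_of_sq_eq_mul (Finset.univ : Finset (Fin K))
      (r := fun _ : Fin K => (1 : ℝ)) (f := φ) (g := fun k => 1 / φ k)
      (fun i _ => (hφ i).le) (fun i _ => le_of_lt (div_pos one_pos (hφ i)))
      (fun i _ => by rw [one_pow, mul_one_div, div_self (hφ i).ne'])
    simp only [Finset.sum_const, Finset.card_univ, Fintype.card_fin, nsmul_eq_mul, mul_one] at h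
    rw [hsum] at h
    have h' : (K : ℝ) * (K : ℝ) ≤ (K : ℝ) * T := by
      calc (K : ℝ) * (K : ℝ) = ((K : ℝ))^2 := by ring
        _ ≤ (K : ℝ) * T := h
    exact le_of_mul_le_mul_left h' hK0
  -- ∑ 1/φ² ≥ K
  set Q : ℝ := ∑ k, 1 / φ k ^ 2 with hQ
  have hQK : (K : ℝ) ≤ Q := by
    have h := sq_sum_le_card_mul_sum_sq (s := (Finset.univ : Finset (Fin K)))
      (f := fun k => 1 / φ k)
    rw [Finset.card_univ, Fintype.card_fin] at h
    have hrw : ∑ k, (1 / φ k) ^ 2 = Q := by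
      rw [hQ]; exact Finset.sum_congr rfl fun k _ => by rw [div_pow, one_pow]
    rw [hrw] at h
    have hT2 : (K : ℝ) * (K : ℝ) ≤ T ^ 2 := by
      have := mul_le_mul hTK hTK hK0.le (le_trans hK0.le hTK)
      calc (K : ℝ) * (K : ℝ) ≤ T * T := this
        _ = T ^ 2 := by ring
    have h' : (K : ℝ) * (K : ℝ) ≤ (K : ℝ) * Q := le_trans hT2 h
    exact le_of_mul_le_mul_left h' hK0
  -- the second inequality
  have hsecond : ((K : ℝ) - 1) / K ≤ (1 / (K : ℝ)) * Q - 1 / S := by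
    have h1 : (1 : ℝ) ≤ (1 / (K : ℝ)) * Q := by
      rw [one_div, inv_mul_eq_div, le_div_iff₀ hK0, one_mul]; exact hQK
    have h2 : 1 / S ≤ 1 / (K : ℝ) := one_div_le_one_div_of_le hK0 hSK
    have : ((K : ℝ) - 1) / K = 1 - 1 / K := by field_simp
    rw [this]
    linarith
  -- first expression equals second
  have hfirst_eq :
      (∑ k, (∑ l ∈ Finset.univ.erase k, φ l ^ 2) / ((K : ℝ) * φ k ^ 2)) / S
        = (1 / (K : ℝ)) * Q - 1 / S := by
    have hterm : ∀ k : Fin K,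
        (∑ l ∈ Finset.univ.erase k, φ l ^ 2) / ((K : ℝ) * φ k ^ 2)
          = S / ((K : ℝ) * φ k ^ 2) - 1 / K := by
      intro k
      have he : ∑ l ∈ Finset.univ.erase k, φ l ^ 2 = S - φ k ^ 2 := by
        rw [hS, Finset.sum_erase_eq_sub (Finset.mem_univ k)]
      rw [he, sub_div]
      congr 1
      rw [mul_comm, div_mul_eq_div_div, div_self (hφsq k).ne']
    rw [Finset.sum_congr rfl (fun k _ => hterm k), Finset.sum_sub_distrib]
    simp only [Finset.sum_const, Finset.card_univ, Fintype.card_fin, nsmul_eq_mul]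
    have hsum2 : ∑ k, S / ((K : ℝ) * φ k ^ 2) = S / K * Q := by
      rw [hQ, Finset.mul_sum]
      refine Finset.sum_congr rfl fun k _ => ?_
      have := (hφsq k).ne'
      field_simp
    rw [hsum2]
    field_simp
  refine ⟨?_, hsecond, ?_⟩
  · rw [hfirst_eq]; exact hsecond
  · simp only [one_pow, mul_one, Finset.sum_const, Finset.card_erase_of_mem (Finset.mem_univ _),
      Finset.card_univ, Fintype.card_fin, nsmul_eq_mul]
    rw [Nat.cast_sub hK]
    field_simp
    norm_num
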